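/- Let K be a compact line and G : K → ℝ amenable. If f : K → ℝ is G-integrable on K, then for every nonempty subinterval I ⊆ K, the indicator function f_I (equal to f on I and 0 elsewhere) is G-integrable on K. -/

import Mathlib

open Set Filter MeasureTheory

/-- A tagged partition of the interval `[a,b]` in a linear order `K`. -/
structure TaggedPartition (K : Type*) [LinearOrder K] (a b : K) where
  n : ℕ
  x : ℕ → K
  t : ℕ → K
  x_zero : x 0 = a
  x_last : x n = b
  mono : ∀ i < n, x i ≤ x (i + 1)
  tag_mem : ∀ i < n, t (i + 1) ∈ Set.Icc (x i) (x (i + 1))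

/-- A gauge on the interval `[a,b]` of `K`: each point of `[a,b]` is assigned a
relatively open subinterval of `[a,b]` containing it. -/
def IsGauge (K : Type*) [LinearOrder K] [TopologicalSpace K] (a b : K) (δ : K → Set K) : Prop :=
  ∀ x ∈ Set.Icc a b, x ∈ δ x ∧ (δ x).OrdConnected ∧ ∃ U, IsOpen U ∧ δ x = U ∩ Set.Icc a b

/-- A tagged partition is `δ`-fine when `(x_{i-1}, x_i] ⊆ δ(t_i)` for all `i`. -/
def TaggedPartition.IsFine {K : Type*} [LinearOrder K] {a b : K}
    (P : TaggedPartition K a b) (δ : K → Set K) : Prop :=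
  ∀ i < P.n, Set.Ioc (P.x i) (P.x (i + 1)) ⊆ δ (P.t (i + 1))

/-- The Riemann sum `S(f,G,P) = f(a)G(a) + Σ f(t_i)(G(x_i) - G(x_{i-1}))`. -/
noncomputable def riemannSum {K : Type*} [LinearOrder K] {a b : K}
    (f G : K → ℝ) (P : TaggedPartition K a b) : ℝ :=
  f a * G a + ∑ i ∈ Finset.range P.n, f (P.t (i + 1)) * (G (P.x (i + 1)) - G (P.x i))

/-- `f` has Kurzweil–Stieltjes integral `A` with respect to `G` over `[a,b]`. -/
def HasIntegral {K : Type*} [LinearOrder K] [TopologicalSpace K]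
    (f G : K → ℝ) (a b : K) (A : ℝ) : Prop :=
  ∀ ε : ℝ, 0 < ε → ∃ δ : K → Set K, IsGauge K a b δ ∧
    ∀ P : TaggedPartition K a b, P.IsFine δ → |riemannSum f G P - A| < ε

/-- `G` is amenable: right-continuous everywhere, and regulated (left limits exist at
left-dense points, right limits at right-dense points). -/
def Amenable {K : Type*} [LinearOrder K] [TopologicalSpace K] [BoundedOrder K]
    (G : K → ℝ) : Prop :=
  (∀ x : K, ContinuousWithinAt G (Set.Ici x) x) ∧
  (∀ x : K, x ≠ ⊥ → (¬ ∃ y, y ⋖ x) → ∃ l, Filter.Tendsto G (nhdsWithin x (Set.Iio x)) (nhds l)) ∧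
  (∀ x : K, x ≠ ⊤ → (¬ ∃ y, x ⋖ y) → ∃ l, Filter.Tendsto G (nhdsWithin x (Set.Ioi x)) (nhds l))

open Classical in
/-- `L_G(x)`: `0` at the least element, `G` of the immediate predecessor if `x` is
left-isolated, and the left limit of `G` at `x` if `x` is left-dense. -/
noncomputable def Lfun {K : Type*} [LinearOrder K] [TopologicalSpace K] [BoundedOrder K]
    (G : K → ℝ) (x : K) : ℝ :=
  if x = ⊥ then 0
  else if h : ∃ y, y ⋖ x then G h.choose
  else Function.leftLim G x

/-- The set of variation sums of `G` over divisions of `[a,b]`. -/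
def varSums {K : Type*} [LinearOrder K] (G : K → ℝ) (a b : K) : Set ℝ :=
  {v | ∃ (n : ℕ) (x : ℕ → K), x 0 = a ∧ x n = b ∧ (∀ i < n, x i ≤ x (i + 1)) ∧
        v = ∑ i ∈ Finset.range n, |G (x (i + 1)) - G (x i)|}

/-- `S` is null for the outer measure induced by `μ` via covers by countably many
open intervals. -/
def GNull {K : Type*} [LinearOrder K] [TopologicalSpace K] [MeasurableSpace K]
    (μ : MeasureTheory.Measure K) (S : Set K) : Prop :=
  ∀ ε : ℝ, 0 < ε → ∃ I : ℕ → Set K, (∀ n, IsOpen (I n) ∧ (I n).OrdConnected) ∧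
    S ⊆ ⋃ n, I n ∧ ∑' n, μ (I n) < ENNReal.ofReal ε

set_option linter.unusedSectionVars false
set_option maxHeartbeats 1000000

section Partitions
variable {K : Type*} [LinearOrder K] {a b c m y τ : K} {f G : K → ℝ} {δ : K → Set K}

/-- The trivial partition of `[a,a]`. -/
def TPsingle (a : K) : TaggedPartition K a a :=
  ⟨0, fun _ => a, fun _ => a, rfl, rfl, fun i h => absurd h (Nat.not_lt_zero i),
    fun i h => absurd h (Nat.not_lt_zero i)⟩

lemma TPsingle_isFine (a : K) (δ : K → Set K) : (TPsingle a).IsFine δ :=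
  fun i h => absurd h (Nat.not_lt_zero i)

lemma riemannSum_TPsingle : riemannSum f G (TPsingle a) = f a * G a := by
  simp [riemannSum, TPsingle]

/-- Extend a partition of `[a,c]` by one cell `(c,y]` with tag `τ`. -/
def TaggedPartition.extend (P : TaggedPartition K a c) (y τ : K) (hcy : c ≤ y)
    (h1 : c ≤ τ) (h2 : τ ≤ y) : TaggedPartition K a y where
  n := P.n + 1
  x := fun i => if i ≤ P.n then P.x i else y
  t := fun i => if i ≤ P.n then P.t i else τ
  x_zero := by rw [if_pos (Nat.zero_le _), P.x_zero]
  x_last := by rw [if_neg (by omega)]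
  mono := by
    intro i hi
    rcases Nat.lt_or_ge i P.n with h | h
    · rw [if_pos (by omega), if_pos (by omega)]
      exact P.mono i h
    · have hieq : i = P.n := by omega
      subst hieq
      rw [if_pos le_rfl, if_neg (by omega), P.x_last]
      exact hcy
  tag_mem := by
    intro i hi
    rcases Nat.lt_or_ge i P.n with h | h
    · rw [if_pos (by omega), if_pos (by omega), if_pos (by omega)]
      exact P.tag_mem i h
    · have hieq : i = P.n := by omega
      subst hieq
      have hneg : ¬ (P.n + 1 ≤ P.n) := by omega
      rw [if_neg hneg, if_pos (le_refl P.n), if_neg hneg, P.x_last]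
      exact ⟨h1, h2⟩

lemma riemannSum_extend (P : TaggedPartition K a c) (hcy : c ≤ y) (h1 : c ≤ τ) (h2 : τ ≤ y) :
    riemannSum f G (P.extend y τ hcy h1 h2) = riemannSum f G P + f τ * (G y - G c) := by
  unfold riemannSum TaggedPartition.extend
  dsimp only
  have hneg : ¬ (P.n + 1 ≤ P.n) := by omega
  rw [Finset.sum_range_succ, if_neg hneg, if_neg hneg, if_pos (le_refl P.n), P.x_last]
  rw [add_assoc]
  congr 2
  refine Finset.sum_congr rfl fun i hi => ?_
  rw [Finset.mem_range] at hi
  rw [if_pos (by omega : i + 1 ≤ P.n), if_pos (by omega : i + 1 ≤ P.n),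
    if_pos (by omega : i ≤ P.n)]

lemma extend_isFine {P : TaggedPartition K a c} (hP : P.IsFine δ) (hcy : c ≤ y)
    (h1 : c ≤ τ) (h2 : τ ≤ y) (hcell : Ioc c y ⊆ δ τ) :
    (P.extend y τ hcy h1 h2).IsFine δ := by
  intro i hi
  unfold TaggedPartition.extend at hi ⊢
  dsimp only at hi ⊢
  rcases Nat.lt_or_ge i P.n with h | h
  · rw [if_pos (by omega), if_pos (by omega), if_pos (by omega)]
    exact hP i h
  · have hieq : i = P.n := by omega
    subst hieq
    have hneg : ¬ (P.n + 1 ≤ P.n) := by omega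
    rw [if_pos (le_refl P.n), if_neg hneg, if_neg hneg, P.x_last]
    exact hcell

/-- The first `k` cells of a partition. -/
def TaggedPartition.prefixP (P : TaggedPartition K a b) (k : ℕ) (hk : k ≤ P.n) :
    TaggedPartition K a (P.x k) :=
  ⟨k, P.x, P.t, P.x_zero, rfl, fun i hi => P.mono i (lt_of_lt_of_le hi hk),
    fun i hi => P.tag_mem i (lt_of_lt_of_le hi hk)⟩

lemma riemannSum_prefixP (P : TaggedPartition K a b) (k : ℕ) (hk : k ≤ P.n) :
    riemannSum f G (P.prefixP k hk) =
      f a * G a + ∑ i ∈ Finset.range k, f (P.t (i+1)) * (G (P.x (i+1)) - G (P.x i)) := rfl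

lemma prefixP_isFine {P : TaggedPartition K a b} (hP : P.IsFine δ) (k : ℕ) (hk : k ≤ P.n) :
    (P.prefixP k hk).IsFine δ := fun i hi => hP i (lt_of_lt_of_le hi hk)

/-- The cells of a partition from index `k` on. -/
def TaggedPartition.tailP (P : TaggedPartition K a b) (k : ℕ) (hk : k ≤ P.n) :
    TaggedPartition K (P.x k) b where
  n := P.n - k
  x := fun i => P.x (k + i)
  t := fun i => P.t (k + i)
  x_zero := rfl
  x_last := by rw [Nat.add_sub_cancel' hk, P.x_last]
  mono := fun i hi => by
    have := P.mono (k + i) (by omega)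
    rwa [Nat.add_assoc] at this
  tag_mem := fun i hi => by
    have := P.tag_mem (k + i) (by omega)
    rwa [Nat.add_assoc] at this

lemma tailP_isFine {P : TaggedPartition K a b} (hP : P.IsFine δ) (k : ℕ) (hk : k ≤ P.n) :
    (P.tailP k hk).IsFine δ := by
  intro i hi
  unfold TaggedPartition.tailP at hi ⊢
  dsimp only at hi ⊢
  rw [← Nat.add_assoc]
  exact hP (k + i) (by omega)

lemma riemannSum_tailP (P : TaggedPartition K a b) (k : ℕ) (hk : k ≤ P.n) :
    riemannSum f G (P.tailP k hk) = f (P.x k) * G (P.x k) +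
      ∑ i ∈ Finset.Ico k P.n, f (P.t (i+1)) * (G (P.x (i+1)) - G (P.x i)) := by
  unfold riemannSum TaggedPartition.tailP
  dsimp only
  congr 1
  rw [Finset.sum_Ico_eq_sum_range]
  refine Finset.sum_congr rfl fun i hi => ?_
  have h1 : k + (i + 1) = k + i + 1 := by omega
  rw [h1]

end Partitions
section XMono
variable {K : Type*} [LinearOrder K] {a b : K}

lemma TaggedPartition.x_mono (P : TaggedPartition K a b) :
    ∀ {i j : ℕ}, i ≤ j → j ≤ P.n → P.x i ≤ P.x j := by
  intro i j hij hj
  induction j with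
  | zero => cases Nat.le_zero.mp hij; exact le_rfl
  | succ j ih =>
      rcases Nat.lt_succ_iff_lt_or_eq.mp (Nat.lt_succ_of_le hij) with h | h
      · exact (ih (by omega) (by omega)).trans (P.mono j (by omega))
      · subst h; exact le_rfl

end XMono
section Concat
variable {K : Type*} [LinearOrder K] {a b m : K} {f G : K → ℝ} {δ : K → Set K}

private def cX (P : TaggedPartition K a m) (Q : TaggedPartition K m b) : ℕ → K :=
  fun i => if i ≤ P.n then P.x i else Q.x (i - P.n)

private def cT (P : TaggedPartition K a m) (Q : TaggedPartition K m b) : ℕ → K :=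
  fun i => if i ≤ P.n then P.t i else Q.t (i - P.n)

private lemma cX_le (P : TaggedPartition K a m) (Q : TaggedPartition K m b) {i : ℕ}
    (h : i ≤ P.n) : cX P Q i = P.x i := if_pos h

private lemma cX_add (P : TaggedPartition K a m) (Q : TaggedPartition K m b) (j : ℕ) :
    cX P Q (P.n + j) = Q.x j := by
  cases j with
  | zero => rw [cX, if_pos (by omega), Nat.add_zero, P.x_last, Q.x_zero]
  | succ j =>
      rw [cX, if_neg (by omega)]
      congr 1
      omega

private lemma cT_add (P : TaggedPartition K a m) (Q : TaggedPartition K m b) (j : ℕ) (hj : 1 ≤ j) :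
    cT P Q (P.n + j) = Q.t j := by
  rw [cT, if_neg (by omega)]
  congr 1
  omega

/-- Concatenation of a partition of `[a,m]` and a partition of `[m,b]`. -/
def TaggedPartition.concat (P : TaggedPartition K a m) (Q : TaggedPartition K m b) :
    TaggedPartition K a b where
  n := P.n + Q.n
  x := cX P Q
  t := cT P Q
  x_zero := by rw [cX_le P Q (Nat.zero_le _), P.x_zero]
  x_last := by rw [cX_add P Q Q.n, Q.x_last]
  mono := by
    intro i hi
    rcases Nat.lt_or_ge i P.n with h | h
    · rw [cX_le P Q (by omega), cX_le P Q (by omega)]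
      exact P.mono i h
    · obtain ⟨j, rfl⟩ : ∃ j, i = P.n + j := ⟨i - P.n, by omega⟩
      have h1 : P.n + j + 1 = P.n + (j + 1) := by omega
      rw [h1, cX_add, cX_add]
      exact Q.mono j (by omega)
  tag_mem := by
    intro i hi
    rcases Nat.lt_or_ge i P.n with h | h
    · rw [cX_le P Q (by omega), cX_le P Q (by omega)]
      have : cT P Q (i + 1) = P.t (i + 1) := if_pos (by omega)
      rw [this]
      exact P.tag_mem i h
    · obtain ⟨j, rfl⟩ : ∃ j, i = P.n + j := ⟨i - P.n, by omega⟩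
      have h1 : P.n + j + 1 = P.n + (j + 1) := by omega
      rw [h1, cX_add, cX_add, cT_add P Q (j+1) (by omega)]
      exact Q.tag_mem j (by omega)

lemma concat_isFine {P : TaggedPartition K a m} {Q : TaggedPartition K m b}
    (hP : P.IsFine δ) (hQ : Q.IsFine δ) : (P.concat Q).IsFine δ := by
  intro i hi
  unfold TaggedPartition.concat at hi ⊢
  dsimp only at hi ⊢
  rcases Nat.lt_or_ge i P.n with h | h
  · rw [cX_le P Q (by omega), cX_le P Q (by omega)]
    have : cT P Q (i + 1) = P.t (i + 1) := if_pos (by omega)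
    rw [this]
    exact hP i h
  · obtain ⟨j, rfl⟩ : ∃ j, i = P.n + j := ⟨i - P.n, by omega⟩
    have h1 : P.n + j + 1 = P.n + (j + 1) := by omega
    rw [h1, cX_add, cX_add, cT_add P Q (j+1) (by omega)]
    exact hQ j (by omega)

lemma riemannSum_concat (P : TaggedPartition K a m) (Q : TaggedPartition K m b) :
    riemannSum f G (P.concat Q) = riemannSum f G P + riemannSum f G Q - f m * G m := by
  unfold riemannSum TaggedPartition.concat
  dsimp only
  have hsplit : ∑ i ∈ Finset.range (P.n + Q.n), f (cT P Q (i+1)) * (G (cX P Q (i+1)) - G (cX P Q i))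
      = (∑ i ∈ Finset.range P.n, f (cT P Q (i+1)) * (G (cX P Q (i+1)) - G (cX P Q i)))
        + ∑ i ∈ Finset.range Q.n, f (cT P Q (P.n + i + 1)) * (G (cX P Q (P.n + i + 1)) - G (cX P Q (P.n + i))) := by
    rw [Finset.range_eq_Ico, ← Finset.sum_Ico_consecutive _ (Nat.zero_le P.n) (Nat.le_add_right P.n Q.n),
      ← Finset.range_eq_Ico, Finset.sum_Ico_eq_sum_range]
    congr 1
    · refine Finset.sum_congr (by congr 1; omega) fun i hi => rfl
  rw [hsplit]
  have e1 : ∀ i ∈ Finset.range P.n, f (cT P Q (i+1)) * (G (cX P Q (i+1)) - G (cX P Q i))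
      = f (P.t (i+1)) * (G (P.x (i+1)) - G (P.x i)) := by
    intro i hi
    rw [Finset.mem_range] at hi
    rw [cX_le P Q (by omega), cX_le P Q (by omega)]
    have : cT P Q (i + 1) = P.t (i + 1) := if_pos (by omega)
    rw [this]
  have e2 : ∀ i ∈ Finset.range Q.n, f (cT P Q (P.n + i + 1)) * (G (cX P Q (P.n + i + 1)) - G (cX P Q (P.n + i)))
      = f (Q.t (i+1)) * (G (Q.x (i+1)) - G (Q.x i)) := by
    intro i hi
    have h1 : P.n + i + 1 = P.n + (i + 1) := by omega
    rw [h1, cX_add, cX_add, cT_add P Q (i+1) (by omega)]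
  rw [Finset.sum_congr rfl e1, Finset.sum_congr rfl e2]
  ring

end Concat
section Helpers
variable {K : Type*} [LinearOrder K] [TopologicalSpace K] [OrderTopology K]
  [CompactSpace K] [BoundedOrder K]

lemma exists_isLUB' (S : Set K) : ∃ d, IsLUB S d := by
  have hc : IsClosed (upperBounds S) := by
    have : upperBounds S = ⋂ x ∈ S, Ici x := by
      ext y; simp [upperBounds, mem_iInter₂]
    rw [this]
    exact isClosed_biInter fun x _ => isClosed_Ici
  obtain ⟨d, hd⟩ := (hc.isCompact).exists_isLeast ⟨⊤, fun x _ => le_top⟩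
  exact ⟨d, hd⟩

lemma exists_isGLB' (S : Set K) : ∃ c, IsGLB S c := by
  have hc : IsClosed (lowerBounds S) := by
    have : lowerBounds S = ⋂ x ∈ S, Iic x := by
      ext y; simp [lowerBounds, mem_iInter₂]
    rw [this]
    exact isClosed_biInter fun x _ => isClosed_Iic
  obtain ⟨c, hd⟩ := (hc.isCompact).exists_isGreatest ⟨⊥, fun x _ => bot_le⟩
  exact ⟨c, hd⟩

lemma exists_Ioc_nbhd {x : K} (hx : x ≠ ⊥) {U : Set K} (hU : U ∈ nhds x) :
    ∃ y < x, Ioc y x ⊆ U :=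
  exists_Ioc_subset_of_mem_nhds hU ⟨⊥, bot_lt_iff_ne_bot.mpr hx⟩

lemma exists_Ico_nbhd {x : K} (hx : x ≠ ⊤) {U : Set K} (hU : U ∈ nhds x) :
    ∃ z, x < z ∧ Ico x z ⊆ U :=
  exists_Ico_subset_of_mem_nhds hU ⟨⊤, lt_top_iff_ne_top.mpr hx⟩

lemma exists_ordConnected_nbhd {x : K} {U : Set K} (hU : IsOpen U) (hx : x ∈ U) :
    ∃ V : Set K, IsOpen V ∧ V.OrdConnected ∧ x ∈ V ∧ V ⊆ U := by
  have hnh : U ∈ nhds x := hU.mem_nhds hx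
  by_cases hb : x = ⊥ <;> by_cases ht : x = ⊤
  · refine ⟨univ, isOpen_univ, ordConnected_univ, mem_univ _, fun y _ => ?_⟩
    have : y = x := le_antisymm (ht ▸ le_top) (hb ▸ bot_le)
    rwa [this]
  · obtain ⟨z, hxz, hsub⟩ := exists_Ico_nbhd ht hnh
    refine ⟨Iio z, isOpen_Iio, ordConnected_Iio, hxz, fun y hy => hsub ⟨hb ▸ bot_le, hy⟩⟩
  · obtain ⟨y, hyx, hsub⟩ := exists_Ioc_nbhd hb hnh
    refine ⟨Ioi y, isOpen_Ioi, ordConnected_Ioi, hyx, fun z hz => hsub ⟨hz, ht ▸ le_top⟩⟩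
  · obtain ⟨y, hyx, hsub1⟩ := exists_Ioc_nbhd hb hnh
    obtain ⟨z, hxz, hsub2⟩ := exists_Ico_nbhd ht hnh
    refine ⟨Ioo y z, isOpen_Ioo, ordConnected_Ioo, ⟨hyx, hxz⟩, fun w hw => ?_⟩
    rcases le_or_gt w x with h | h
    · exact hsub1 ⟨hw.1, h⟩
    · exact hsub2 ⟨h.le, hw.2⟩

lemma exists_between_of_not_covBy {x z : K} (h : x < z) (hcov : ¬ ∃ y, x ⋖ y) :
    ∃ w, x < w ∧ w < z := by
  by_contra hcon
  push_neg at hcon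
  exact hcov ⟨z, h, fun w hw hwz => absurd (hcon w hw) (not_le.mpr hwz)⟩

end Helpers
section Cousin
variable {K : Type*} [LinearOrder K] [TopologicalSpace K] [OrderTopology K]
  [CompactSpace K] [BoundedOrder K] {f G : K → ℝ} {δ : K → Set K}

lemma isGauge_bot_top_iff {δ : K → Set K} :
    IsGauge K ⊥ ⊤ δ ↔ ∀ x : K, x ∈ δ x ∧ (δ x).OrdConnected ∧ IsOpen (δ x) := by
  constructor
  · intro h x
    obtain ⟨h1, h2, U, hU, hUeq⟩ := h x ⟨bot_le, le_top⟩
    refine ⟨h1, h2, ?_⟩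
    rw [hUeq, Set.Icc_bot_top, Set.inter_univ]
    exact hU
  · intro h x _
    exact ⟨(h x).1, (h x).2.1, δ x, (h x).2.2, by rw [Set.Icc_bot_top, Set.inter_univ]⟩

lemma isGauge_mk {δ : K → Set K} (h : ∀ x : K, x ∈ δ x ∧ (δ x).OrdConnected ∧ IsOpen (δ x)) :
    IsGauge K ⊥ ⊤ δ := isGauge_bot_top_iff.mpr h

/-- Cousin's lemma: every gauge on a compact line admits a fine tagged partition. -/
theorem cousin (hδ : IsGauge K ⊥ ⊤ δ) : ∃ P : TaggedPartition K ⊥ ⊤, P.IsFine δ := by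
  rw [isGauge_bot_top_iff] at hδ
  set S : Set K := {y | ∃ P : TaggedPartition K ⊥ y, P.IsFine δ} with hSdef
  have hS0 : (⊥ : K) ∈ S := ⟨TPsingle ⊥, TPsingle_isFine ⊥ δ⟩
  obtain ⟨c, hc⟩ := exists_isLUB' S
  have hcS : c ∈ S := by
    by_cases hcb : c = ⊥
    · rw [hcb]; exact hS0
    · obtain ⟨y, hyc, hyU⟩ := exists_Ioc_nbhd hcb ((hδ c).2.2.mem_nhds (hδ c).1)
      have hex : ∃ s ∈ S, y < s := by
        by_contra h
        push_neg at h
        exact absurd (hc.2 h) (not_le.mpr hyc)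
      obtain ⟨s, hsS, hys⟩ := hex
      have hsc : s ≤ c := hc.1 hsS
      obtain ⟨P, hP⟩ := hsS
      rcases eq_or_lt_of_le hsc with h | h
      · exact h ▸ ⟨P, hP⟩
      · refine ⟨P.extend c c hsc hsc le_rfl, extend_isFine hP hsc hsc le_rfl ?_⟩
        exact fun z hz => hyU ⟨hys.trans hz.1, hz.2⟩
  by_cases hct : c = ⊤
  · rw [hct] at hcS; exact hcS
  · exfalso
    obtain ⟨P, hP⟩ := hcS
    by_cases hsucc : ∃ s, c ⋖ s
    · obtain ⟨s, hs⟩ := hsucc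
      have hsS : s ∈ S := by
        refine ⟨P.extend s s hs.le hs.le le_rfl, extend_isFine hP hs.le hs.le le_rfl ?_⟩
        intro z hz
        have : z = s := le_antisymm hz.2 (le_of_not_gt (hs.2 hz.1))
        rw [this]
        exact (hδ s).1
      exact absurd (hc.1 hsS) (not_le.mpr hs.lt)
    · have hlt : c < ⊤ := lt_top_iff_ne_top.mpr hct
      obtain ⟨z, hcz, hzU⟩ := exists_Ico_nbhd hct ((hδ c).2.2.mem_nhds (hδ c).1)
      obtain ⟨w, hcw, hwz⟩ := exists_between_of_not_covBy hcz hsucc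
      have hwS : w ∈ S := by
        refine ⟨P.extend w c hcw.le le_rfl hcw.le, extend_isFine hP hcw.le le_rfl hcw.le ?_⟩
        exact fun z' hz' => hzU ⟨hz'.1.le, lt_of_le_of_lt hz'.2 hwz⟩
      exact absurd (hc.1 hwS) (not_le.mpr hcw)

lemma gauge_inter {δ₁ δ₂ : K → Set K} (h₁ : IsGauge K ⊥ ⊤ δ₁) (h₂ : IsGauge K ⊥ ⊤ δ₂) :
    IsGauge K ⊥ ⊤ (fun x => δ₁ x ∩ δ₂ x) := by
  rw [isGauge_bot_top_iff] at h₁ h₂ ⊢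
  intro x
  exact ⟨⟨(h₁ x).1, (h₂ x).1⟩, (h₁ x).2.1.inter (h₂ x).2.1, (h₁ x).2.2.inter (h₂ x).2.2⟩

lemma isFine_mono {P : TaggedPartition K ⊥ ⊤} {δ₁ δ₂ : K → Set K}
    (h : ∀ x, δ₁ x ⊆ δ₂ x) (hP : P.IsFine δ₁) : P.IsFine δ₂ :=
  fun i hi => (hP i hi).trans (h _)

/-- The Cauchy criterion implies existence of the integral. -/
theorem hasIntegral_of_cauchy (f G : K → ℝ)
    (H : ∀ ε : ℝ, 0 < ε → ∃ δ : K → Set K, IsGauge K ⊥ ⊤ δ ∧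
      ∀ P Q : TaggedPartition K ⊥ ⊤, P.IsFine δ → Q.IsFine δ →
        |riemannSum f G P - riemannSum f G Q| < ε) :
    ∃ B, HasIntegral f G ⊥ ⊤ B := by
  have hpos : ∀ n : ℕ, (0:ℝ) < 1 / (n + 1) := fun n => by positivity
  choose δ0 hδ0g hδ0 using fun n : ℕ => H (1 / (n + 1)) (hpos n)
  set D : ℕ → K → Set K := fun n x => ⋂ k ∈ Finset.range (n + 1), δ0 k x with hD
  have hDg : ∀ n, IsGauge K ⊥ ⊤ (D n) := by
    intro n
    apply isGauge_mk
    intro x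
    refine ⟨?_, ?_, ?_⟩
    · exact Set.mem_iInter₂.mpr fun k _ => ((isGauge_bot_top_iff.mp (hδ0g k)) x).1
    · constructor
      intro p hp q hq z hz
      exact Set.mem_iInter₂.mpr fun k hk =>
        ((isGauge_bot_top_iff.mp (hδ0g k)) x).2.1.out
          (Set.mem_iInter₂.mp hp k hk) (Set.mem_iInter₂.mp hq k hk) hz
    · exact isOpen_biInter_finset fun k _ => ((isGauge_bot_top_iff.mp (hδ0g k)) x).2.2
  have hDsub : ∀ n k, k ≤ n → ∀ x, D n x ⊆ δ0 k x := by
    intro n k hk x z hz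
    exact Set.mem_iInter₂.mp hz k (Finset.mem_range.mpr (by omega))
  choose P hPfine using fun n => cousin (hDg n)
  set s : ℕ → ℝ := fun n => riemannSum f G (P n) with hs
  have key : ∀ m n, m ≤ n → |s n - s m| < 1 / (m + 1) := by
    intro m n hmn
    exact hδ0 m (P n) (P m) (isFine_mono (hDsub n m hmn) (hPfine n))
      (isFine_mono (hDsub m m le_rfl) (hPfine m))
  have hcauchy : CauchySeq s := by
    rw [Metric.cauchySeq_iff']
    intro ε hε
    obtain ⟨N, hN⟩ := exists_nat_one_div_lt hε
    refine ⟨N, fun n hn => ?_⟩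
    rw [Real.dist_eq]
    calc |s n - s N| < 1 / (N + 1) := key N n hn
      _ < ε := hN
  obtain ⟨B, hB⟩ := cauchySeq_tendsto_of_complete hcauchy
  refine ⟨B, fun ε hε => ?_⟩
  obtain ⟨N, hN⟩ := exists_nat_one_div_lt (half_pos hε)
  refine ⟨D N, hDg N, fun Q hQ => ?_⟩
  have hle : |riemannSum f G Q - B| ≤ 1 / (N + 1) := by
    have htend : Tendsto (fun n => |riemannSum f G Q - s n|) atTop (nhds (|riemannSum f G Q - B|)) := by
      exact ((continuous_abs.comp (continuous_const.sub continuous_id)).continuousAt.tendsto.comp hB)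
    refine le_of_tendsto htend (eventually_atTop.mpr ⟨N, fun n hn => ?_⟩)
    have : |riemannSum f G Q - s n| < 1 / (N + 1) :=
      hδ0 N Q (P n) (isFine_mono (hDsub N N le_rfl) hQ) (isFine_mono (hDsub n N hn) (hPfine n))
    exact this.le
  calc |riemannSum f G Q - B| ≤ 1 / (N + 1) := hle
    _ < ε / 2 := hN
    _ < ε := half_lt_self hε

end Cousin
section Ctrl
variable {K : Type*} [LinearOrder K] [TopologicalSpace K] [OrderTopology K]
  [CompactSpace K] [BoundedOrder K] {G : K → ℝ}

lemma right_ctrl (hG : Amenable G) (u : K) {ε : ℝ} (hε : 0 < ε) {U : Set K}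
    (hU : IsOpen U) (huU : u ∈ U) :
    ∃ O : Set K, IsOpen O ∧ O.OrdConnected ∧ u ∈ O ∧ O ⊆ U ∧
      ∀ v ∈ O, u ≤ v → |G v - G u| < ε := by
  have h := hG.1 u
  have hball : G ⁻¹' Metric.ball (G u) ε ∈ nhdsWithin u (Ici u) :=
    h (Metric.ball_mem_nhds _ hε)
  obtain ⟨W, hWo, huW, hWsub⟩ := mem_nhdsWithin.mp hball
  obtain ⟨V, hVo, hVoc, huV, hVsub⟩ := exists_ordConnected_nbhd (hU.inter hWo) ⟨huU, huW⟩
  refine ⟨V, hVo, hVoc, huV, fun z hz => (hVsub hz).1, fun v hv huv => ?_⟩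
  have : v ∈ G ⁻¹' Metric.ball (G u) ε := hWsub ⟨(hVsub hv).2, huv⟩
  rwa [Set.mem_preimage, Metric.mem_ball, Real.dist_eq] at this

lemma left_ctrl (hG : Amenable G) (u : K) :
    ∃ L : ℝ, (u = ⊥ → L = G ⊥) ∧ ∀ ε : ℝ, 0 < ε → ∀ U : Set K, IsOpen U → u ∈ U →
      ∃ O : Set K, IsOpen O ∧ O.OrdConnected ∧ u ∈ O ∧ O ⊆ U ∧
        ∀ v, v < u → Ioc v u ⊆ O → |G v - L| < ε := by
  by_cases hu : u = ⊥
  · refine ⟨G ⊥, fun _ => rfl, fun ε hε U hU huU => ?_⟩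
    obtain ⟨V, hVo, hVoc, huV, hVsub⟩ := exists_ordConnected_nbhd hU huU
    exact ⟨V, hVo, hVoc, huV, hVsub, fun v hv _ => absurd hv (by simp [hu, le_bot_iff, not_lt])⟩
  by_cases h : ∃ p, p ⋖ u
  · obtain ⟨p, hp⟩ := h
    refine ⟨G p, fun hb => absurd hb hu, fun ε hε U hU huU => ?_⟩
    obtain ⟨V, hVo, hVoc, huV, hVsub⟩ := exists_ordConnected_nbhd hU huU
    refine ⟨V ∩ Ioi p, hVo.inter isOpen_Ioi, hVoc.inter ordConnected_Ioi, ⟨huV, hp.lt⟩,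
      fun z hz => hVsub hz.1, ?_⟩
    intro v hv hsub
    have hpv : p ≤ v := by
      by_contra hh
      push_neg at hh
      exact absurd (hsub ⟨hh, hp.lt.le⟩).2 (lt_irrefl p)
    have hvp : v = p := le_antisymm (le_of_not_gt fun hlt => hp.2 hlt hv) hpv
    rw [hvp, sub_self, abs_zero]
    exact hε
  · obtain ⟨l, hl⟩ := hG.2.1 u hu h
    refine ⟨l, fun hb => absurd hb hu, fun ε hε U hU huU => ?_⟩
    have hball : G ⁻¹' Metric.ball l ε ∈ nhdsWithin u (Iio u) := hl (Metric.ball_mem_nhds _ hε)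
    obtain ⟨W, hWo, huW, hWsub⟩ := mem_nhdsWithin.mp hball
    obtain ⟨V, hVo, hVoc, huV, hVsub⟩ := exists_ordConnected_nbhd (hU.inter hWo) ⟨huU, huW⟩
    obtain ⟨w, hwu, hwV⟩ : ∃ w, w < u ∧ w ∈ V := by
      obtain ⟨y, hy, hysub⟩ := exists_Ioc_nbhd hu (hVo.mem_nhds huV)
      obtain ⟨w, hyw, hwu⟩ : ∃ w, y < w ∧ w < u := by
        by_contra hcon
        push_neg at hcon
        exact h ⟨y, hy, fun w hw hwu => absurd (hcon w hw) (not_le.mpr hwu)⟩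
      exact ⟨w, hwu, hysub ⟨hyw, hwu.le⟩⟩
    refine ⟨V ∩ Ioi w, hVo.inter isOpen_Ioi, hVoc.inter ordConnected_Ioi, ⟨huV, hwu⟩,
      fun z hz => (hVsub hz.1).1, ?_⟩
    intro v hv hsub
    have hwv : w ≤ v := by
      by_contra hh
      push_neg at hh
      exact absurd (hsub ⟨hh, hwu.le⟩).2 (lt_irrefl w)
    have hvV : v ∈ V := by
      rcases eq_or_lt_of_le hwv with h1 | h1
      · rwa [← h1]
      · exact hVoc.out hwV huV ⟨hwv, hv.le⟩
    have : v ∈ G ⁻¹' Metric.ball l ε := hWsub ⟨(hVsub hvV).2, hv⟩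
    rwa [Set.mem_preimage, Metric.mem_ball, Real.dist_eq] at this

end Ctrl
section Split
variable {K : Type*} [LinearOrder K] [TopologicalSpace K] [OrderTopology K]
  [CompactSpace K] [BoundedOrder K]

open Classical in
/-- Structure of a fine partition relative to a point `u`, for a gauge separating
points below and above `u`, together with the value of the Riemann sum of an
indicator of a set `S` with `u ∈ S ⊆ Iic u`. -/
lemma split_sum (f G : K → ℝ) {u : K} {δ : K → Set K} (S : Set K) (hSu : u ∈ S)
    (hS : S ⊆ Set.Iic u)
    (hsep1 : ∀ t, t < u → δ t ⊆ Set.Iio u) (hsep2 : ∀ t, u < t → δ t ⊆ Set.Ioi u)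
    {P : TaggedPartition K ⊥ ⊤} (hP : P.IsFine δ) :
    ∃ k j : ℕ, k ≤ j ∧ j ≤ P.n ∧
      (∀ i : ℕ, i + 1 < k → P.t (i + 1) < u) ∧
      ((P.x (k - 1) = u ∧ u = ⊥) ∨ (P.x (k - 1) < u ∧ Set.Ioc (P.x (k - 1)) u ⊆ δ u)) ∧
      (P.x j = u ∨ (P.x j ∈ δ u ∧ u ≤ P.x j)) ∧
      (u ≠ ⊥ → 1 ≤ k ∧ u ≤ P.x k ∧ P.t k = u ∧ Set.Ioc (P.x (k - 1)) (P.x k) ⊆ δ u ∧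
        P.x (k - 1) < u) ∧
      riemannSum (S.indicator f) G P = S.indicator f ⊥ * G ⊥
        + (∑ i ∈ Finset.range (k - 1),
            S.indicator f (P.t (i + 1)) * (G (P.x (i + 1)) - G (P.x i)))
        + f u * (G (P.x j) - G (P.x (k - 1))) := by
  classical
  have hfind : ∃ m, u ≤ P.x m := ⟨P.n, by rw [P.x_last]; exact le_top⟩
  set k := Nat.find hfind with hkdef
  have hxk : u ≤ P.x k := Nat.find_spec hfind
  have hxlt : ∀ m, m < k → P.x m < u := fun m hm => not_le.mp (Nat.find_min hfind hm)
  have hk_le : k ≤ P.n := Nat.find_le (by rw [P.x_last]; exact le_top)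
  -- the pack for u ≠ ⊥
  have pack : u ≠ ⊥ → 1 ≤ k ∧ u ≤ P.x k ∧ P.t k = u ∧
      Set.Ioc (P.x (k - 1)) (P.x k) ⊆ δ u ∧ P.x (k - 1) < u := by
    intro hu
    have hk1 : 1 ≤ k := by
      rcases Nat.eq_zero_or_pos k with h | h
      · exfalso
        have hx0 := hxk
        rw [h, P.x_zero] at hx0
        exact hu (le_bot_iff.mp hx0)
      · exact h
    have hkm : k - 1 < k := by omega
    have hxkm : P.x (k - 1) < u := hxlt _ hkm
    have hcell : Set.Ioc (P.x (k - 1)) (P.x k) ⊆ δ (P.t k) := by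
      have := hP (k - 1) (by omega)
      have hkk : k - 1 + 1 = k := by omega
      rwa [hkk] at this
    have hu_mem : u ∈ Set.Ioc (P.x (k - 1)) (P.x k) := ⟨hxkm, hxk⟩
    have htk : P.t k = u := by
      rcases lt_trichotomy (P.t k) u with h | h | h
      · exact absurd (hsep1 _ h (hcell hu_mem)) (lt_irrefl u)
      · exact h
      · exact absurd (hsep2 _ h (hcell hu_mem)) (lt_irrefl u)
    exact ⟨hk1, hxk, htk, htk ▸ hcell, hxkm⟩
  have hkbot : u = ⊥ → k = 0 := by
    intro hu
    rw [hkdef, Nat.find_eq_zero]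
    rw [P.x_zero, hu]
  -- j
  set j := Nat.findGreatest (fun m => 1 ≤ m ∧ P.t m = u) P.n with hjdef
  obtain ⟨hj_le, hjP, hjmax⟩ :=
    (Nat.findGreatest_eq_iff.mp (hjdef.symm) : j ≤ P.n ∧ (j ≠ 0 → 1 ≤ j ∧ P.t j = u) ∧
      ∀ m, j < m → m ≤ P.n → ¬(1 ≤ m ∧ P.t m = u))
  have hkj : k ≤ j := by
    by_cases hu : u = ⊥
    · rw [hkbot hu]; exact Nat.zero_le _
    · obtain ⟨hk1, _, htk, _, _⟩ := pack hu
      exact Nat.le_findGreatest hk_le ⟨hk1, htk⟩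
  have htj : 1 ≤ j → P.t j = u := fun h1 => (hjP (by omega)).2
  -- middle x values are u
  have hmid : ∀ m, k ≤ m → m < j → P.x m = u := by
    intro m hkm hmj
    have hj1 : 1 ≤ j := by omega
    have hup : P.x m ≤ u := by
      have h1 : P.x m ≤ P.x (j - 1) := P.x_mono (by omega) (by omega)
      have h2 : P.x (j - 1) ≤ P.t j := by
        have := P.tag_mem (j - 1) (by omega)
        have hjj : j - 1 + 1 = j := by omega
        rw [hjj] at this
        exact this.1
      rw [htj hj1] at h2
      exact h1.trans h2
    exact le_antisymm hup (hxk.trans (P.x_mono hkm (by omega)))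
  -- u ≤ x j
  have hxj_ge : u ≤ P.x j := hxk.trans (P.x_mono hkj hj_le)
  -- (c)
  have hcj : P.x j = u ∨ (P.x j ∈ δ u ∧ u ≤ P.x j) := by
    rcases Nat.eq_zero_or_pos j with h0 | h1
    · left
      have hk0 : k = 0 := by omega
      have hx0 := hxk
      rw [hk0, P.x_zero] at hx0
      rw [h0, P.x_zero, le_bot_iff.mp hx0]
    · have htjj : P.t j = u := htj h1
      have hx1 : P.x (j - 1) ≤ u := by
        have := P.tag_mem (j - 1) (by omega)
        have hjj : j - 1 + 1 = j := by omega
        rw [hjj, htjj] at this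
        exact this.1
      rcases eq_or_lt_of_le (P.x_mono (Nat.sub_le j 1) hj_le : P.x (j-1) ≤ P.x j) with he | hlt
      · left
        exact le_antisymm (he ▸ hx1) hxj_ge
      · right
        refine ⟨?_, hxj_ge⟩
        have hcell : Set.Ioc (P.x (j - 1)) (P.x j) ⊆ δ (P.t j) := by
          have := hP (j - 1) (by omega)
          have hjj : j - 1 + 1 = j := by omega
          rwa [hjj] at this
        rw [htjj] at hcell
        exact hcell ⟨hlt, le_rfl⟩
  -- (a)
  have ha : ∀ i : ℕ, i + 1 < k → P.t (i + 1) < u := by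
    intro i hik
    have h1 : P.t (i + 1) ≤ P.x (i + 1) := (P.tag_mem i (by omega)).2
    exact lt_of_le_of_lt h1 (hxlt _ hik)
  -- (b)
  have hb : (P.x (k - 1) = u ∧ u = ⊥) ∨
      (P.x (k - 1) < u ∧ Set.Ioc (P.x (k - 1)) u ⊆ δ u) := by
    by_cases hu : u = ⊥
    · left
      rw [hkbot hu, P.x_zero, hu]
      exact ⟨rfl, rfl⟩
    · right
      obtain ⟨hk1, hxk', htk, hcell, hxkm⟩ := pack hu
      exact ⟨hxkm, fun z hz => hcell ⟨hz.1, hz.2.trans hxk'⟩⟩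
  -- the sum formula
  refine ⟨k, j, hkj, hj_le, ha, hb, hcj, pack, ?_⟩
  unfold riemannSum
  have hsplit : ∑ i ∈ Finset.range P.n,
      S.indicator f (P.t (i + 1)) * (G (P.x (i + 1)) - G (P.x i))
      = (∑ i ∈ Finset.Ico 0 (k - 1), S.indicator f (P.t (i + 1)) * (G (P.x (i + 1)) - G (P.x i)))
        + (∑ i ∈ Finset.Ico (k - 1) j, S.indicator f (P.t (i + 1)) * (G (P.x (i + 1)) - G (P.x i)))
        + ∑ i ∈ Finset.Ico j P.n, S.indicator f (P.t (i + 1)) * (G (P.x (i + 1)) - G (P.x i)) := by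
    rw [Finset.sum_Ico_consecutive _ (by omega : 0 ≤ k - 1) (by omega : k - 1 ≤ j),
      Finset.sum_Ico_consecutive _ (by omega : 0 ≤ j) hj_le, Finset.range_eq_Ico]
  have hlast : ∑ i ∈ Finset.Ico j P.n,
      S.indicator f (P.t (i + 1)) * (G (P.x (i + 1)) - G (P.x i)) = 0 := by
    refine Finset.sum_eq_zero fun i hi => ?_
    rw [Finset.mem_Ico] at hi
    have hxi : u ≤ P.x i := hxj_ge.trans (P.x_mono hi.1 (by omega))
    have hti : u ≤ P.t (i + 1) := hxi.trans (P.tag_mem i hi.2).1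
    have htne : P.t (i + 1) ≠ u := by
      intro he
      exact hjmax (show j < i + 1 by omega) (by omega) ⟨by omega, he⟩
    have : P.t (i + 1) ∉ S := fun hmem => htne (le_antisymm (hS hmem) hti)
    rw [Set.indicator_of_notMem this, zero_mul]
  have hmidsum : ∑ i ∈ Finset.Ico (k - 1) j,
      S.indicator f (P.t (i + 1)) * (G (P.x (i + 1)) - G (P.x i))
      = f u * (G (P.x j) - G (P.x (k - 1))) := by
    have hterm : ∀ i ∈ Finset.Ico (k - 1) j,
        S.indicator f (P.t (i + 1)) * (G (P.x (i + 1)) - G (P.x i))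
        = f u * (G (P.x (i + 1)) - G (P.x i)) := by
      intro i hi
      rw [Finset.mem_Ico] at hi
      by_cases htm : P.t (i + 1) = u
      · rw [htm, Set.indicator_of_mem hSu]
      · have hj1 : 1 ≤ j := by omega
        have hne_j : i + 1 ≠ j := fun he => htm (he ▸ htj hj1)
        have hik : i + 1 ≠ k ∨ u = ⊥ := by
          by_cases hu : u = ⊥
          · right; exact hu
          · left
            intro he
            exact htm (he ▸ (pack hu).2.2.1)
        have hik : k ≤ i := by
          rcases hik with h | h
          · omega
          · rw [hkbot h]; omega
        have hx1 : P.x i = u := hmid i hik (by omega)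
        have hx2 : P.x (i + 1) = u := hmid (i + 1) (by omega) (by omega)
        rw [hx1, hx2, sub_self, mul_zero, mul_zero]
    rw [Finset.sum_congr rfl hterm, ← Finset.mul_sum]
    congr 1
    rw [Finset.sum_Ico_eq_sub _ (by omega : k - 1 ≤ j), Finset.sum_range_sub (fun i => G (P.x i)),
      Finset.sum_range_sub (fun i => G (P.x i))]
    ring
  rw [hsplit, hlast, hmidsum, ← Finset.range_eq_Ico]
  ring
end Split
section Beta
variable {K : Type*} [LinearOrder K] [TopologicalSpace K] [OrderTopology K]
  [CompactSpace K] [BoundedOrder K] {G : K → ℝ}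

/-- Build a gauge which equals `O` at `u`, refines `δ₀`, and separates the two
sides of `u`. -/
lemma build_gauge (u : K) (O : Set K) (hOo : IsOpen O) (hOoc : O.OrdConnected)
    (huO : u ∈ O) (δ₀ : K → Set K) (hδ₀ : ∀ t, IsOpen (δ₀ t) ∧ t ∈ δ₀ t) :
    ∃ δ : K → Set K, IsGauge K ⊥ ⊤ δ ∧ δ u = O ∧ (∀ t, t ≠ u → δ t ⊆ δ₀ t) ∧
      (∀ t, t < u → δ t ⊆ Set.Iio u) ∧ (∀ t, u < t → δ t ⊆ Set.Ioi u) := by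
  classical
  have hch : ∀ t : K, t ≠ u → ∃ V : Set K, IsOpen V ∧ V.OrdConnected ∧ t ∈ V ∧ V ⊆ δ₀ t ∧
      (t < u → V ⊆ Set.Iio u) ∧ (u < t → V ⊆ Set.Ioi u) := by
    intro t ht
    rcases lt_or_gt_of_ne ht with h | h
    · obtain ⟨V, hVo, hVoc, htV, hVsub⟩ :=
        exists_ordConnected_nbhd ((hδ₀ t).1.inter isOpen_Iio) ⟨(hδ₀ t).2, h⟩
      exact ⟨V, hVo, hVoc, htV, fun z hz => (hVsub hz).1,
        fun _ z hz => (hVsub hz).2, fun hgt => absurd hgt (not_lt_of_gt h)⟩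
    · obtain ⟨V, hVo, hVoc, htV, hVsub⟩ :=
        exists_ordConnected_nbhd ((hδ₀ t).1.inter isOpen_Ioi) ⟨(hδ₀ t).2, h⟩
      exact ⟨V, hVo, hVoc, htV, fun z hz => (hVsub hz).1,
        fun hlt => absurd hlt (not_lt_of_gt h), fun _ z hz => (hVsub hz).2⟩
  choose V hVo hVoc hVmem hVsub hVlt hVgt using hch
  refine ⟨fun t => if h : t = u then O else V t h, ?_, by simp, ?_, ?_, ?_⟩
  · apply isGauge_mk
    intro t
    by_cases h : t = u
    · subst h; simp only [dif_pos rfl]; exact ⟨huO, hOoc, hOo⟩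
    · simp only [dif_neg h]; exact ⟨hVmem t h, hVoc t h, hVo t h⟩
  · intro t ht; simp only [dif_neg ht]; exact hVsub t ht
  · intro t ht; simp only [dif_neg ht.ne]; exact hVlt t ht.ne ht
  · intro t ht; simp only [dif_neg ht.ne']; exact hVgt t ht.ne' ht

lemma singleton_integrable (hG : Amenable G) (f : K → ℝ) (u : K) :
    ∃ B, HasIntegral (Set.indicator {u} f) G ⊥ ⊤ B := by
  obtain ⟨L, hLbot, hL⟩ := left_ctrl hG u
  refine ⟨Set.indicator {u} f ⊥ * G ⊥ + f u * (G u - L), fun ε hε => ?_⟩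
  set ε' := ε / (2 * (|f u| + 1)) with hε'def
  have hε'pos : 0 < ε' := by rw [hε'def]; positivity
  obtain ⟨Or, hOro, hOroc, huOr, _, hOrctrl⟩ :=
    right_ctrl hG u hε'pos isOpen_univ (Set.mem_univ u)
  obtain ⟨Ol, hOlo, hOloc, huOl, hOlsub, hOlctrl⟩ := hL ε' hε'pos Or hOro huOr
  obtain ⟨δ, hδg, hδu, _, hsep1, hsep2⟩ :=
    build_gauge u Ol hOlo hOloc huOl (fun _ => Set.univ)
      (fun t => ⟨isOpen_univ, Set.mem_univ t⟩)
  refine ⟨δ, hδg, fun P hP => ?_⟩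
  obtain ⟨k, j, hkj, hj_le, ha, hb, hcj, hpack, hsum⟩ :=
    split_sum f G {u} (Set.mem_singleton u) (fun z hz => le_of_eq hz)
      hsep1 hsep2 hP
  rw [hδu] at hb hcj hpack
  have hmid0 : ∑ i ∈ Finset.range (k - 1),
      Set.indicator {u} f (P.t (i + 1)) * (G (P.x (i + 1)) - G (P.x i)) = 0 := by
    refine Finset.sum_eq_zero fun i hi => ?_
    rw [Finset.mem_range] at hi
    have := ha i (by omega)
    rw [Set.indicator_of_notMem (by simp only [Set.mem_singleton_iff]; exact this.ne), zero_mul]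
  have h1 : |G (P.x j) - G u| ≤ ε' := by
    rcases hcj with h | h
    · rw [h, sub_self, abs_zero]; exact hε'pos.le
    · exact (hOrctrl (P.x j) (hOlsub h.1) h.2).le
  have h2 : |G (P.x (k - 1)) - L| ≤ ε' := by
    rcases hb with h | h
    · rw [h.1, h.2, hLbot h.2, sub_self, abs_zero]; exact hε'pos.le
    · exact (hOlctrl (P.x (k - 1)) h.1 h.2).le
  have hkey : riemannSum (Set.indicator {u} f) G P -
      (Set.indicator {u} f ⊥ * G ⊥ + f u * (G u - L))
      = f u * ((G (P.x j) - G u) + (L - G (P.x (k - 1)))) := by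
    rw [hsum, hmid0]; ring
  rw [hkey]
  have habs : |f u * ((G (P.x j) - G u) + (L - G (P.x (k - 1))))|
      ≤ |f u| * (ε' + ε') := by
    rw [abs_mul]
    refine mul_le_mul_of_nonneg_left ?_ (abs_nonneg _)
    calc |(G (P.x j) - G u) + (L - G (P.x (k - 1)))|
        ≤ |G (P.x j) - G u| + |L - G (P.x (k - 1))| := abs_add_le _ _
      _ ≤ ε' + ε' := by rw [abs_sub_comm L]; exact add_le_add h1 h2
  refine lt_of_le_of_lt habs ?_
  have hd : ε' * (2 * (|f u| + 1)) = ε := by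
    rw [hε'def]; field_simp
  nlinarith [abs_nonneg (f u), hε'pos]

end Beta
section Alpha
variable {K : Type*} [LinearOrder K] [TopologicalSpace K] [OrderTopology K]
  [CompactSpace K] [BoundedOrder K] {G : K → ℝ}

lemma iic_integrable (hG : Amenable G) (f : K → ℝ) {A : ℝ}
    (hf : HasIntegral f G ⊥ ⊤ A) (u : K) :
    ∃ B, HasIntegral (Set.indicator (Set.Iic u) f) G ⊥ ⊤ B := by
  by_cases hu : u = ⊥
  · rw [hu, Set.Iic_bot]
    exact singleton_integrable hG f ⊥
  apply hasIntegral_of_cauchy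
  intro ε hε
  obtain ⟨δ₀, hδ₀g, hδ₀⟩ := hf (ε / 4) (by positivity)
  have hδ₀' := isGauge_bot_top_iff.mp hδ₀g
  set ε' := ε / (8 * (|f u| + 1)) with hε'def
  have hε'pos : 0 < ε' := by rw [hε'def]; positivity
  obtain ⟨O, hOo, hOoc, huO, hOsub, hOctrl⟩ :=
    right_ctrl hG u hε'pos (hδ₀' u).2.2 (hδ₀' u).1
  obtain ⟨δ, hδg, hδu, hδsub', hsep1, hsep2⟩ :=
    build_gauge u O hOo hOoc huO δ₀ (fun t => ⟨(hδ₀' t).2.2, (hδ₀' t).1⟩)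
  have hδsub : ∀ t, δ t ⊆ δ₀ t := by
    intro t
    by_cases h : t = u
    · subst h; rw [hδu]; exact hOsub
    · exact hδsub' t h
  refine ⟨δ, hδg, fun P Q hP hQ => ?_⟩
  have hP0 : P.IsFine δ₀ := isFine_mono hδsub hP
  have hQ0 : Q.IsFine δ₀ := isFine_mono hδsub hQ
  -- split both partitions
  obtain ⟨kP, jP, hkjP, hjP_le, haP, hbP, hcjP, hpackP, hsumP⟩ :=
    split_sum f G (Set.Iic u) (Set.mem_Iic.mpr le_rfl) (fun z hz => hz) hsep1 hsep2 hP
  obtain ⟨kQ, jQ, hkjQ, hjQ_le, haQ, hbQ, hcjQ, hpackQ, hsumQ⟩ :=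
    split_sum f G (Set.Iic u) (Set.mem_Iic.mpr le_rfl) (fun z hz => hz) hsep1 hsep2 hQ
  obtain ⟨hkP1, hxkP, htkP, hcellP, hxkmP⟩ := hpackP hu
  obtain ⟨hkQ1, hxkQ, htkQ, hcellQ, hxkmQ⟩ := hpackQ hu
  have hkP_le : kP ≤ P.n := by omega
  have hkQ_le : kQ ≤ Q.n := by omega
  -- the cut partitions of [⊥, u]
  set Pcut : TaggedPartition K ⊥ u :=
    (P.prefixP (kP - 1) (by omega)).extend u u hxkmP.le hxkmP.le le_rfl with hPcut
  set Qcut : TaggedPartition K ⊥ u :=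
    (Q.prefixP (kQ - 1) (by omega)).extend u u hxkmQ.le hxkmQ.le le_rfl with hQcut
  have hIocP : Set.Ioc (P.x (kP - 1)) u ⊆ δ₀ u :=
    fun z hz => hδsub u (hcellP ⟨hz.1, hz.2.trans hxkP⟩)
  have hIocQ : Set.Ioc (Q.x (kQ - 1)) u ⊆ δ₀ u :=
    fun z hz => hδsub u (hcellQ ⟨hz.1, hz.2.trans hxkQ⟩)
  have hPcut_fine : Pcut.IsFine δ₀ :=
    extend_isFine (prefixP_isFine hP0 _ (by omega)) _ _ _ hIocP
  have hQcut_fine : Qcut.IsFine δ₀ :=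
    extend_isFine (prefixP_isFine hQ0 _ (by omega)) _ _ _ hIocQ
  -- the spliced partition Qhat
  set oneCell : TaggedPartition K u (P.x kP) :=
    (TPsingle u).extend (P.x kP) u hxkP le_rfl hxkP with honeCell
  have honeCell_fine : oneCell.IsFine δ₀ := by
    apply extend_isFine (TPsingle_isFine u δ₀)
    intro z hz
    exact hδsub u (hcellP ⟨hxkmP.trans hz.1, hz.2⟩)
  set Rtail : TaggedPartition K u ⊤ := oneCell.concat (P.tailP kP hkP_le) with hRtail
  have hRtail_fine : Rtail.IsFine δ₀ := concat_isFine honeCell_fine (tailP_isFine hP0 kP hkP_le)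
  set Qhat : TaggedPartition K ⊥ ⊤ := Qcut.concat Rtail with hQhat
  have hQhat_fine : Qhat.IsFine δ₀ := concat_isFine hQcut_fine hRtail_fine
  -- sums of f
  set T : ℝ := ∑ i ∈ Finset.Ico kP P.n, f (P.t (i + 1)) * (G (P.x (i + 1)) - G (P.x i)) with hT
  have hsum_fP : riemannSum f G P = riemannSum f G Pcut + f u * (G (P.x kP) - G u) + T := by
    have e1 : riemannSum f G Pcut =
        f ⊥ * G ⊥ + (∑ i ∈ Finset.range (kP - 1), f (P.t (i + 1)) * (G (P.x (i + 1)) - G (P.x i)))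
          + f u * (G u - G (P.x (kP - 1))) := by
      rw [hPcut, riemannSum_extend, riemannSum_prefixP]
    have e2 : riemannSum f G P = f ⊥ * G ⊥
        + (∑ i ∈ Finset.range (kP - 1), f (P.t (i + 1)) * (G (P.x (i + 1)) - G (P.x i)))
        + f u * (G (P.x kP) - G (P.x (kP - 1))) + T := by
      unfold riemannSum
      rw [hT, Finset.range_eq_Ico,
        ← Finset.sum_Ico_consecutive _ (by omega : 0 ≤ kP) hkP_le,
        ← Finset.sum_Ico_consecutive _ (by omega : 0 ≤ kP - 1) (by omega : kP - 1 ≤ kP),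
        ← Finset.range_eq_Ico]
      have hsing : Finset.Ico (kP - 1) kP = {kP - 1} := by
        ext x
        simp only [Finset.mem_Ico, Finset.mem_singleton]
        omega
      rw [hsing, Finset.sum_singleton, show kP - 1 + 1 = kP by omega, htkP]
      ring
    rw [e1, e2]
    ring
  have hsum_fQhat : riemannSum f G Qhat = riemannSum f G Qcut + f u * (G (P.x kP) - G u) + T := by
    have e3 : riemannSum f G (P.tailP kP hkP_le) = f (P.x kP) * G (P.x kP) + T :=
      riemannSum_tailP P kP hkP_le
    have e4 : riemannSum f G oneCell = f u * G u + f u * (G (P.x kP) - G u) := by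
      rw [honeCell, riemannSum_extend, riemannSum_TPsingle]
    have e5 : riemannSum f G Rtail = riemannSum f G oneCell
        + riemannSum f G (P.tailP kP hkP_le) - f (P.x kP) * G (P.x kP) := riemannSum_concat _ _
    have e6 : riemannSum f G Qhat = riemannSum f G Qcut + riemannSum f G Rtail - f u * G u := by
      rw [hQhat]
      have := riemannSum_concat (f := f) (G := G) Qcut Rtail
      rwa [hRtail] at this ⊢
    rw [e6, e5, e4, e3]
    ring
  have hmain : |riemannSum f G Pcut - riemannSum f G Qcut| < ε / 2 := by
    have d1 := hδ₀ P hP0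
    have d2 := hδ₀ Qhat hQhat_fine
    have : riemannSum f G Pcut - riemannSum f G Qcut
        = (riemannSum f G P - A) - (riemannSum f G Qhat - A) := by
      rw [hsum_fP, hsum_fQhat]; ring
    rw [this]
    calc |(riemannSum f G P - A) - (riemannSum f G Qhat - A)|
        ≤ |riemannSum f G P - A| + |riemannSum f G Qhat - A| := abs_sub _ _
      _ < ε / 4 + ε / 4 := add_lt_add d1 d2
      _ = ε / 2 := by ring
  -- indicator sums in terms of cut sums
  have hindP : riemannSum (Set.indicator (Set.Iic u) f) G P
      = riemannSum f G Pcut + f u * (G (P.x jP) - G u) := by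
    rw [hsumP]
    have hhead : Set.indicator (Set.Iic u) f (⊥ : K) = f ⊥ :=
      Set.indicator_of_mem (Set.mem_Iic.mpr bot_le) f
    have hterms : ∀ i ∈ Finset.range (kP - 1),
        Set.indicator (Set.Iic u) f (P.t (i + 1)) * (G (P.x (i + 1)) - G (P.x i))
        = f (P.t (i + 1)) * (G (P.x (i + 1)) - G (P.x i)) := by
      intro i hi
      rw [Finset.mem_range] at hi
      rw [Set.indicator_of_mem (Set.mem_Iic.mpr (haP i (by omega)).le) f]
    rw [hhead, Finset.sum_congr rfl hterms, hPcut, riemannSum_extend, riemannSum_prefixP]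
    ring
  have hindQ : riemannSum (Set.indicator (Set.Iic u) f) G Q
      = riemannSum f G Qcut + f u * (G (Q.x jQ) - G u) := by
    rw [hsumQ]
    have hhead : Set.indicator (Set.Iic u) f (⊥ : K) = f ⊥ :=
      Set.indicator_of_mem (Set.mem_Iic.mpr bot_le) f
    have hterms : ∀ i ∈ Finset.range (kQ - 1),
        Set.indicator (Set.Iic u) f (Q.t (i + 1)) * (G (Q.x (i + 1)) - G (Q.x i))
        = f (Q.t (i + 1)) * (G (Q.x (i + 1)) - G (Q.x i)) := by
      intro i hi
      rw [Finset.mem_range] at hi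
      rw [Set.indicator_of_mem (Set.mem_Iic.mpr (haQ i (by omega)).le) f]
    rw [hhead, Finset.sum_congr rfl hterms, hQcut, riemannSum_extend, riemannSum_prefixP]
    ring
  -- boundary error bounds
  have hbdP : |G (P.x jP) - G u| ≤ ε' := by
    rcases hcjP with h | h
    · rw [h, sub_self, abs_zero]; exact hε'pos.le
    · rw [hδu] at h
      exact (hOctrl (P.x jP) h.1 h.2).le
  have hbdQ : |G (Q.x jQ) - G u| ≤ ε' := by
    rcases hcjQ with h | h
    · rw [h, sub_self, abs_zero]; exact hε'pos.le
    · rw [hδu] at h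
      exact (hOctrl (Q.x jQ) h.1 h.2).le
  -- conclude
  have hfin : riemannSum (Set.indicator (Set.Iic u) f) G P
      - riemannSum (Set.indicator (Set.Iic u) f) G Q
      = (riemannSum f G Pcut - riemannSum f G Qcut)
        + f u * (G (P.x jP) - G u) - f u * (G (Q.x jQ) - G u) := by
    rw [hindP, hindQ]; ring
  rw [hfin]
  have hb1 : |f u * (G (P.x jP) - G u)| ≤ |f u| * ε' := by
    rw [abs_mul]; exact mul_le_mul_of_nonneg_left hbdP (abs_nonneg _)
  have hb2 : |f u * (G (Q.x jQ) - G u)| ≤ |f u| * ε' := by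
    rw [abs_mul]; exact mul_le_mul_of_nonneg_left hbdQ (abs_nonneg _)
  have hfe : |f u| * ε' ≤ ε / 8 := by
    have h8 : (0:ℝ) < 8 * (|f u| + 1) := by positivity
    rw [hε'def, ← mul_div_assoc, div_le_div_iff₀ h8 (by norm_num : (0:ℝ) < 8)]
    nlinarith [abs_nonneg (f u), hε.le]
  calc |(riemannSum f G Pcut - riemannSum f G Qcut)
        + f u * (G (P.x jP) - G u) - f u * (G (Q.x jQ) - G u)|
      ≤ |riemannSum f G Pcut - riemannSum f G Qcut|
        + |f u * (G (P.x jP) - G u)| + |f u * (G (Q.x jQ) - G u)| := by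
        exact (abs_sub _ _).trans (add_le_add_left (abs_add_le _ _) _)
    _ ≤ ε / 2 + ε / 8 + ε / 8 := by
        refine add_le_add (add_le_add hmain.le (hb1.trans hfe)) (hb2.trans hfe)
    _ < ε := by linarith

end Alpha
section Main
variable {K : Type*} [LinearOrder K] [TopologicalSpace K] [OrderTopology K]
  [CompactSpace K] [BoundedOrder K] {G : K → ℝ}

lemma hasIntegral_sub {f1 f2 : K → ℝ} {B1 B2 : ℝ} (h1 : HasIntegral f1 G ⊥ ⊤ B1)
    (h2 : HasIntegral f2 G ⊥ ⊤ B2) :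
    HasIntegral (fun x => f1 x - f2 x) G ⊥ ⊤ (B1 - B2) := by
  intro ε hε
  obtain ⟨δ1, hg1, hs1⟩ := h1 (ε / 2) (half_pos hε)
  obtain ⟨δ2, hg2, hs2⟩ := h2 (ε / 2) (half_pos hε)
  refine ⟨fun x => δ1 x ∩ δ2 x, gauge_inter hg1 hg2, fun P hP => ?_⟩
  have hP1 : P.IsFine δ1 := isFine_mono (fun x => Set.inter_subset_left) hP
  have hP2 : P.IsFine δ2 := isFine_mono (fun x => Set.inter_subset_right) hP
  have hsum : riemannSum (fun x => f1 x - f2 x) G P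
      = riemannSum f1 G P - riemannSum f2 G P := by
    simp only [riemannSum, sub_mul]
    rw [Finset.sum_sub_distrib]
    ring
  rw [hsum]
  calc |riemannSum f1 G P - riemannSum f2 G P - (B1 - B2)|
      = |(riemannSum f1 G P - B1) - (riemannSum f2 G P - B2)| := by ring_nf
    _ ≤ |riemannSum f1 G P - B1| + |riemannSum f2 G P - B2| := abs_sub _ _
    _ < ε / 2 + ε / 2 := add_lt_add (hs1 P hP1) (hs2 P hP2)
    _ = ε := add_halves ε

lemma indicator_iio_eq (f : K → ℝ) (u : K) :
    Set.indicator (Set.Iio u) f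
      = fun x => Set.indicator (Set.Iic u) f x - Set.indicator {u} f x := by
  funext x
  simp only [Set.indicator_apply, Set.mem_Iio, Set.mem_Iic, Set.mem_singleton_iff]
  rcases lt_trichotomy x u with h | h | h
  · rw [if_pos h, if_pos h.le, if_neg h.ne]; ring
  · subst h; rw [if_neg (lt_irrefl x), if_pos le_rfl, if_pos rfl]; ring
  · rw [if_neg (not_lt.mpr h.le), if_neg (not_le.mpr h), if_neg h.ne']; ring

lemma iio_integrable (hG : Amenable G) (f : K → ℝ) {A : ℝ}
    (hf : HasIntegral f G ⊥ ⊤ A) (u : K) :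
    ∃ B, HasIntegral (Set.indicator (Set.Iio u) f) G ⊥ ⊤ B := by
  obtain ⟨B1, h1⟩ := iic_integrable hG f hf u
  obtain ⟨B2, h2⟩ := singleton_integrable hG f u
  refine ⟨B1 - B2, ?_⟩
  rw [indicator_iio_eq f u]
  exact hasIntegral_sub h1 h2

end Main

theorem indicator_integrable {K : Type*} [LinearOrder K] [TopologicalSpace K] [OrderTopology K]
    [CompactSpace K] [BoundedOrder K] (G f : K → ℝ) (hG : Amenable G)
    (A : ℝ) (hf : HasIntegral f G (⊥ : K) ⊤ A)
    (I : Set K) (hI : I.OrdConnected) (hne : I.Nonempty) :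
    ∃ B, HasIntegral (I.indicator f) G (⊥ : K) ⊤ B := by
  classical
  obtain ⟨d, hd⟩ := exists_isLUB' I
  obtain ⟨c, hc⟩ := exists_isGLB' I
  obtain ⟨i₀, hi₀⟩ := hne
  have hcd : c ≤ d := (hc.1 hi₀).trans (hd.1 hi₀)
  set D : Set K := if d ∈ I then Set.Iic d else Set.Iio d with hD
  set C : Set K := if c ∈ I then Set.Iio c else Set.Iic c with hC
  have hCc : ∀ x ∈ C, x ≤ c := by
    intro x hx
    rw [hC] at hx
    split_ifs at hx with h
    · exact hx.le
    · exact hx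
  have hCD : C ⊆ D := by
    intro x hx
    have hxc : x ≤ c := hCc x hx
    rw [hD]
    split_ifs with h
    · exact Set.mem_Iic.mpr (hxc.trans hcd)
    · have hcd' : c < d := by
        rcases eq_or_lt_of_le hcd with he | hlt
        · exfalso
          have : i₀ = c := le_antisymm (he ▸ hd.1 hi₀) (hc.1 hi₀)
          exact h (he ▸ this ▸ hi₀)
        · exact hlt
      exact Set.mem_Iio.mpr (lt_of_le_of_lt hxc hcd')
  have hiff : ∀ x, x ∈ I ↔ x ∈ D ∧ x ∉ C := by
    intro x
    constructor
    · intro hx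
      have hcx : c ≤ x := hc.1 hx
      have hxd : x ≤ d := hd.1 hx
      constructor
      · rw [hD]
        split_ifs with h
        · exact hxd
        · exact lt_of_le_of_ne hxd (fun he => h (he ▸ hx))
      · rw [hC]
        split_ifs with h
        · exact not_lt.mpr hcx
        · exact not_le.mpr (lt_of_le_of_ne hcx (fun he => h (he ▸ hx)))
    · rintro ⟨hxD, hxC⟩
      have hxd : x ≤ d := by
        rw [hD] at hxD
        split_ifs at hxD with h
        · exact hxD
        · exact hxD.le
      have hcx : c ≤ x := by
        rw [hC] at hxC
        split_ifs at hxC with h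
        · exact not_lt.mp hxC
        · exact (not_le.mp hxC).le
      rcases eq_or_lt_of_le hxd with he | hxd'
      · rw [hD] at hxD
        split_ifs at hxD with h
        · exact he ▸ h
        · exact absurd (he ▸ hxD) (lt_irrefl d)
      rcases eq_or_lt_of_le hcx with he2 | hcx'
      · rw [hC] at hxC
        split_ifs at hxC with h
        · exact he2 ▸ h
        · exact absurd (Set.mem_Iic.mpr he2.ge) hxC
      · obtain ⟨i2, hi2I, hi2⟩ : ∃ i2 ∈ I, x ≤ i2 := by
          by_contra hcon
          push_neg at hcon
          exact absurd (hd.2 (fun i hi => (hcon i hi).le)) (not_le.mpr hxd')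
        obtain ⟨i1, hi1I, hi1⟩ : ∃ i1 ∈ I, i1 ≤ x := by
          by_contra hcon
          push_neg at hcon
          exact absurd (hc.2 (fun i hi => (hcon i hi).le)) (not_le.mpr hcx')
        exact hI.out hi1I hi2I ⟨hi1, hi2⟩
  have heq : I.indicator f = fun x => D.indicator f x - C.indicator f x := by
    funext x
    by_cases hxI : x ∈ I
    · obtain ⟨hxD, hxC⟩ := (hiff x).1 hxI
      rw [Set.indicator_of_mem hxI, Set.indicator_of_mem hxD, Set.indicator_of_notMem hxC]
      ring
    · rw [Set.indicator_of_notMem hxI]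
      by_cases hxD : x ∈ D
      · have hxC : x ∈ C := by
          by_contra hxC
          exact hxI ((hiff x).2 ⟨hxD, hxC⟩)
        rw [Set.indicator_of_mem hxD, Set.indicator_of_mem hxC]
        ring
      · have hxC : x ∉ C := fun h => hxD (hCD h)
        rw [Set.indicator_of_notMem hxD, Set.indicator_of_notMem hxC]
        ring
  have hDint : ∃ B, HasIntegral (D.indicator f) G (⊥ : K) ⊤ B := by
    rw [hD]
    split_ifs with h
    · exact iic_integrable hG f hf d
    · exact iio_integrable hG f hf d
  have hCint : ∃ B, HasIntegral (C.indicator f) G (⊥ : K) ⊤ B := by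
    rw [hC]
    split_ifs with h
    · exact iio_integrable hG f hf c
    · exact iic_integrable hG f hf c
  obtain ⟨B1, h1⟩ := hDint
  obtain ⟨B2, h2⟩ := hCint
  refine ⟨B1 - B2, ?_⟩
  rw [heq]
  exact hasIntegral_sub h1 h2
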